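/- The mean value of h exists and equals the reciprocal of the twin prime constant: lim_{x→∞} (1/x) ∑_{n≤x} h(n) = ∏_{p prime, p>2} (1 + 1/(p(p−2))) = 1/C₂. -/

import Mathlib

open Filter Topology

/-- `h n = ∏_{p ∣ n, p odd prime} (p-1)/(p-2)`, with `h n = 1` when `n` has no odd prime
divisor. -/
noncomputable def h (n : ℕ) : ℝ :=
  ∏ p ∈ n.primeFactors.filter (fun p => 2 < p), ((p : ℝ) - 1) / ((p : ℝ) - 2)

/-- The twin prime constant `C₂ = ∏_{p prime, p > 2} (1 - 1/(p-1)²)`. -/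
noncomputable def C2 : ℝ :=
  ∏' p : {p : ℕ // p.Prime ∧ 2 < p}, (1 - 1 / (((p : ℕ) : ℝ) - 1) ^ 2)

namespace HMeanAux

open Finset

/-- Multiplicative function supported on squarefree numbers, with value `w p` at primes. -/
noncomputable def mf (w : ℕ → ℝ) (n : ℕ) : ℝ :=
  if Squarefree n then ∏ p ∈ n.primeFactors, w p else 0

lemma mf_zero (w : ℕ → ℝ) : mf w 0 = 0 := by simp [mf, not_squarefree_zero]

lemma mf_one (w : ℕ → ℝ) : mf w 1 = 1 := by simp [mf]

lemma mf_mul (w : ℕ → ℝ) {m n : ℕ} (hmn : Nat.Coprime m n) :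
    mf w (m * n) = mf w m * mf w n := by
  unfold mf
  by_cases h1 : Squarefree m
  · by_cases h2 : Squarefree n
    · rw [if_pos ((Nat.squarefree_mul hmn).mpr ⟨h1, h2⟩), if_pos h1, if_pos h2,
        Nat.Coprime.primeFactors_mul hmn,
        Finset.prod_union (Nat.Coprime.disjoint_primeFactors hmn)]
    · rw [if_neg (fun hsq => h2 ((Nat.squarefree_mul hmn).mp hsq).2), if_neg h2, mul_zero]
  · rw [if_neg (fun hsq => h1 ((Nat.squarefree_mul hmn).mp hsq).1), if_neg h1, zero_mul]

lemma mf_prime (w : ℕ → ℝ) {p : ℕ} (hp : p.Prime) : mf w p = w p := by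
  rw [mf, if_pos hp.squarefree, Nat.Prime.primeFactors hp, Finset.prod_singleton]

lemma mf_pp (w : ℕ → ℝ) {p : ℕ} (hp : p.Prime) {e : ℕ} (he : 2 ≤ e) :
    mf w (p ^ e) = 0 := by
  rw [mf, if_neg]
  intro hsq
  exact hp.not_isUnit (hsq p (by
    calc p * p = p ^ 2 := (sq p).symm
    _ ∣ p ^ e := pow_dvd_pow p he))

lemma tsum_mf_pp (w : ℕ → ℝ) {p : ℕ} (hp : p.Prime) :
    ∑' e : ℕ, mf w (p ^ e) = 1 + w p := by
  rw [tsum_eq_sum (s := {0, 1}) (fun e he => by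
    have h2 : 2 ≤ e := by
      simp only [Finset.mem_insert, Finset.mem_singleton] at he
      omega
    exact mf_pp w hp h2)]
  rw [Finset.sum_pair (by norm_num)]
  simp [mf_one, mf_prime w hp]

lemma squarefree_prod_primes {s : Finset ℕ} (hs : ∀ p ∈ s, p.Prime) :
    Squarefree (∏ p ∈ s, p) := by
  classical
  induction s using Finset.induction_on with
  | empty => simp only [Finset.prod_empty]; exact squarefree_one
  | @insert a s' hx ih =>
    rw [Finset.prod_insert hx]
    have hap : a.Prime := hs a (Finset.mem_insert_self a s')
    have hcop : Nat.Coprime a (∏ p ∈ s', p) := by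
      rw [Nat.Prime.coprime_iff_not_dvd hap]
      intro hdvd
      obtain ⟨q, hq, hq2⟩ := (Nat.Prime.prime hap).exists_mem_finset_dvd hdvd
      have : a = q :=
        (((hs q (Finset.mem_insert_of_mem hq)).dvd_iff_eq hap.ne_one).1 hq2).symm
      exact hx (this ▸ hq)
    rw [Nat.squarefree_mul hcop]
    exact ⟨hap.squarefree, ih (fun p hp => hs p (Finset.mem_insert_of_mem hp))⟩

/-- The bound hypothesis making `mf w` absolutely summable. -/
def Bnd (w : ℕ → ℝ) : Prop :=
  ∀ p : ℕ, p.Prime → |w p| * (p : ℝ) ^ (3/2 : ℝ) ≤ if p = 3 then 2 else 1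

lemma mf_abs_le {w : ℕ → ℝ} (hw : Bnd w) (n : ℕ) :
    ‖mf w n‖ ≤ 2 * (((n : ℝ) ^ (3/2 : ℝ))⁻¹) := by
  unfold mf
  by_cases hsq : Squarefree n
  swap
  · rw [if_neg hsq]; simp; positivity
  rw [if_pos hsq]
  have hfin : ∀ p ∈ n.primeFactors, (0:ℝ) < (p : ℝ) ^ (3/2 : ℝ) := by
    intro p hp
    have : 0 < p := (Nat.prime_of_mem_primeFactors hp).pos
    positivity
  calc ‖∏ p ∈ n.primeFactors, w p‖ = ∏ p ∈ n.primeFactors, |w p| := by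
        rw [Real.norm_eq_abs, Finset.abs_prod]
    _ ≤ ∏ p ∈ n.primeFactors, (if p = 3 then 2 else 1) / (p : ℝ) ^ (3/2 : ℝ) := by
        apply Finset.prod_le_prod (fun p _ => abs_nonneg _)
        intro p hp
        have hpp := Nat.prime_of_mem_primeFactors hp
        rw [le_div_iff₀ (hfin p hp)]
        exact hw p hpp
    _ = (∏ p ∈ n.primeFactors, (if p = 3 then 2 else 1)) /
          (∏ p ∈ n.primeFactors, (p : ℝ) ^ (3/2 : ℝ)) := by
        rw [Finset.prod_div_distrib]
    _ ≤ 2 * (((n : ℝ) ^ (3/2 : ℝ))⁻¹) := by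
        rw [Real.finset_prod_rpow _ _ (fun p _ => by positivity)]
        have hprod : (∏ p ∈ n.primeFactors, (p : ℝ)) = (n : ℝ) := by
          rw [← Nat.cast_prod, Nat.prod_primeFactors_of_squarefree hsq]
        rw [hprod, div_eq_mul_inv]
        have h2 : (∏ p ∈ n.primeFactors, (if p = 3 then (2:ℝ) else 1)) ≤ 2 := by
          rw [Finset.prod_ite_eq' n.primeFactors 3 (fun _ => (2:ℝ))]
          split <;> norm_num
        apply mul_le_mul_of_nonneg_right h2
        positivity

lemma summable_mf_norm {w : ℕ → ℝ} (hw : Bnd w) : Summable (fun n => ‖mf w n‖) := by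
  apply Summable.of_nonneg_of_le (fun n => norm_nonneg _) (mf_abs_le hw)
  exact (Real.summable_nat_rpow_inv.mpr (by norm_num)).mul_left 2

/-- The odd primes subtype. -/
abbrev OP := {p : ℕ // p.Prime ∧ 2 < p}

def opEquiv : OP ≃ {p : Nat.Primes // (p : ℕ) ≠ 2} where
  toFun q := ⟨⟨q.1, q.2.1⟩, q.2.2.ne'⟩
  invFun r := ⟨r.1.1, r.1.2, lt_of_le_of_ne r.1.2.two_le (Ne.symm r.2)⟩
  left_inv _ := rfl
  right_inv _ := rfl

/-- The Euler product for `mf w`, restricted to odd primes. -/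
lemma hasProd_mf {w : ℕ → ℝ} (hw : Bnd w) (hw2 : w 2 = 0) :
    HasProd (fun p : OP => 1 + w (p : ℕ)) (∑' n, mf w n) := by
  have hEP : HasProd (fun p : Nat.Primes => ∑' e : ℕ, mf w ((p : ℕ) ^ e)) (∑' n, mf w n) :=
    EulerProduct.eulerProduct_hasProd (mf_one w) (fun {m n} h => mf_mul w h)
      (summable_mf_norm hw) (mf_zero w)
  have heq : (fun p : Nat.Primes => ∑' e : ℕ, mf w ((p : ℕ) ^ e))
      = fun p : Nat.Primes => 1 + w (p : ℕ) := funext fun p => tsum_mf_pp w p.2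
  rw [heq] at hEP
  have hsupp : Function.mulSupport (fun p : Nat.Primes => 1 + w (p : ℕ))
      ⊆ {p : Nat.Primes | (p : ℕ) ≠ 2} := by
    intro p hp hp2
    apply hp
    simp only [Set.mem_setOf_eq] at hp2 ⊢
    rw [show ((p : ℕ)) = 2 from not_not.mp (by simpa using hp2), hw2, add_zero]
  exact (Equiv.hasProd_iff opEquiv).mpr
    ((hasProd_subtype_iff_of_mulSupport_subset hsupp).mpr hEP)

/-! ### The two specific weight functions -/

noncomputable def w1 (p : ℕ) : ℝ := if 2 < p then 1 / ((p : ℝ) * ((p : ℝ) - 2)) else 0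
noncomputable def w2 (p : ℕ) : ℝ := if 2 < p then -(1 / ((p : ℝ) - 1) ^ 2) else 0

lemma w1_two : w1 2 = 0 := by simp [w1]
lemma w2_two : w2 2 = 0 := by simp [w2]

lemma rpow_three_halves {x : ℝ} (hx : 0 < x) : x ^ (3/2 : ℝ) = x * Real.sqrt x := by
  rw [Real.sqrt_eq_rpow, show (3/2 : ℝ) = 1 + 1/2 by norm_num, Real.rpow_add hx, Real.rpow_one]

lemma prime_ge_five {p : ℕ} (hp : p.Prime) (h2 : 2 < p) (h3 : p ≠ 3) : 5 ≤ p := by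
  have h4 : p ≠ 4 := by rintro rfl; norm_num at hp
  omega

lemma bnd_w1 : Bnd w1 := by
  intro p hp
  by_cases h2 : 2 < p
  swap
  · simp only [w1, if_neg h2, abs_zero, zero_mul]
    split <;> norm_num
  have hq3 : (3 : ℝ) ≤ (p : ℝ) := by exact_mod_cast h2
  have hq0 : (0 : ℝ) < (p : ℝ) := by linarith
  set q : ℝ := (p : ℝ)
  set s : ℝ := Real.sqrt q with hs_def
  have hs0 : 0 ≤ s := Real.sqrt_nonneg q
  have hs2 : s ^ 2 = q := Real.sq_sqrt hq0.le
  rw [show w1 p = 1 / (q * (q - 2)) from if_pos h2, rpow_three_halves hq0, ← hs_def]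
  have hden : (0 : ℝ) < q * (q - 2) := by nlinarith
  rw [abs_of_pos (by positivity)]
  by_cases h3 : p = 3
  · rw [if_pos h3]
    have hq : q = 3 := by show ((p:ℕ):ℝ) = 3; rw [h3]; norm_num
    have : s ≤ 2 := by nlinarith [sq_nonneg (s - 2)]
    rw [div_mul_eq_mul_div, one_mul, div_le_iff₀ hden]
    nlinarith
  · rw [if_neg h3]
    have hq5 : (5 : ℝ) ≤ q := by
      show (5:ℝ) ≤ ((p:ℕ):ℝ); exact_mod_cast prime_ge_five hp h2 h3
    have key : s ≤ q - 2 := by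
      nlinarith [sq_nonneg (s - (q - 2)), mul_nonneg hs0 (by linarith : (0:ℝ) ≤ q - 2)]
    rw [div_mul_eq_mul_div, one_mul, div_le_one hden]
    nlinarith

lemma bnd_w2 : Bnd w2 := by
  intro p hp
  by_cases h2 : 2 < p
  swap
  · simp only [w2, if_neg h2, abs_zero, zero_mul]
    split <;> norm_num
  have hq3 : (3 : ℝ) ≤ (p : ℝ) := by exact_mod_cast h2
  have hq0 : (0 : ℝ) < (p : ℝ) := by linarith
  set q : ℝ := (p : ℝ)
  set s : ℝ := Real.sqrt q with hs_def
  have hs0 : 0 ≤ s := Real.sqrt_nonneg q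
  have hs2 : s ^ 2 = q := Real.sq_sqrt hq0.le
  have h1 : (0 : ℝ) < (q - 1) ^ 2 := by nlinarith
  rw [show w2 p = -(1 / (q - 1) ^ 2) from if_pos h2, rpow_three_halves hq0, ← hs_def,
    abs_neg, abs_of_pos (by positivity)]
  by_cases h3 : p = 3
  · rw [if_pos h3]
    have hq : q = 3 := by show ((p:ℕ):ℝ) = 3; rw [h3]; norm_num
    have : s ≤ 2 := by nlinarith [sq_nonneg (s - 2)]
    rw [div_mul_eq_mul_div, one_mul, div_le_iff₀ h1]
    nlinarith
  · rw [if_neg h3]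
    have hq5 : (5 : ℝ) ≤ q := by
      show (5:ℝ) ≤ ((p:ℕ):ℝ); exact_mod_cast prime_ge_five hp h2 h3
    have key : s ≤ q - 2 := by
      nlinarith [sq_nonneg (s - (q - 2)), mul_nonneg hs0 (by linarith : (0:ℝ) ≤ q - 2)]
    rw [div_mul_eq_mul_div, one_mul, div_le_one h1]
    nlinarith

/-! ### The divisor-sum identity for `h` -/

noncomputable def cc (p : ℕ) : ℝ := if 2 < p then 1 / ((p : ℝ) - 2) else 0

lemma cc_nonneg (p : ℕ) : 0 ≤ cc p := by
  unfold cc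
  split
  · have h3 : (3:ℝ) ≤ (p:ℝ) := by exact_mod_cast ‹2 < p›
    have : (0:ℝ) < (p:ℝ) - 2 := by linarith
    positivity
  · exact le_refl _

lemma mf_cc_nonneg (n : ℕ) : 0 ≤ mf cc n := by
  unfold mf
  split
  · exact Finset.prod_nonneg fun p _ => cc_nonneg p
  · exact le_refl _

lemma mf_w1_eq (d : ℕ) : mf w1 d = mf cc d / (d : ℝ) := by
  unfold mf
  by_cases hsq : Squarefree d
  · rw [if_pos hsq, if_pos hsq]
    have hprod : (∏ p ∈ d.primeFactors, (p : ℝ)) = (d : ℝ) := by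
      rw [← Nat.cast_prod, Nat.prod_primeFactors_of_squarefree hsq]
    rw [← hprod, ← Finset.prod_div_distrib]
    apply Finset.prod_congr rfl
    intro p _
    unfold w1 cc
    by_cases h2 : 2 < p
    · rw [if_pos h2, if_pos h2, div_div, mul_comm]
    · rw [if_neg h2, if_neg h2, zero_div]
  · rw [if_neg hsq, if_neg hsq, zero_div]

/-- Key identity: `h n` is the sum of `mf cc` over the divisors of `n`. -/
lemma h_eq_sum_divisors {n : ℕ} (hn : n ≠ 0) :
    h n = ∑ d ∈ n.divisors, mf cc d := by
  classical
  have step1 : ∑ d ∈ n.divisors, mf cc d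
      = ∑ d ∈ n.divisors.filter Squarefree, ∏ p ∈ d.primeFactors, cc p := by
    rw [Finset.sum_filter]
    exact Finset.sum_congr rfl fun d _ => rfl
  rw [step1,
    Nat.sum_divisors_filter_squarefree hn (f := fun d => ∏ p ∈ d.primeFactors, cc p)]
  have htf : (UniqueFactorizationMonoid.normalizedFactors n).toFinset = n.primeFactors := by
    rw [Nat.factors_eq]
    simp
  rw [htf]
  have step2 : ∀ i ∈ n.primeFactors.powerset,
      (∏ p ∈ (Multiset.prod i.val).primeFactors, cc p) = ∏ p ∈ i, cc p := by
    intro i hi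
    rw [Finset.mem_powerset] at hi
    have hprimes : ∀ p ∈ i, p.Prime := fun p hp =>
      Nat.prime_of_mem_primeFactors (hi hp)
    have : Multiset.prod i.val = ∏ p ∈ i, p := by
      rw [Finset.prod_eq_multiset_prod, Multiset.map_id']
    rw [this, Nat.primeFactors_prod hprimes]
  rw [Finset.sum_congr rfl step2]
  have step3 : ∏ p ∈ n.primeFactors, (cc p + 1)
      = ∑ i ∈ n.primeFactors.powerset, ∏ p ∈ i, cc p := by
    rw [Finset.prod_add]
    exact Finset.sum_congr rfl fun i _ => by simp
  rw [← step3]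
  unfold h
  rw [Finset.prod_filter]
  apply Finset.prod_congr rfl
  intro p hp
  have hpp := Nat.prime_of_mem_primeFactors hp
  unfold cc
  by_cases h2 : 2 < p
  · rw [if_pos h2, if_pos h2]
    have h3 : (3:ℝ) ≤ (p:ℝ) := by exact_mod_cast h2
    have : ((p:ℝ) - 2) ≠ 0 := by linarith
    field_simp
    ring
  · rw [if_neg h2, if_neg h2, zero_add]

/-! ### The hyperbola-method swap and dominated convergence -/

lemma sum_h_eq (x : ℕ) :
    ∑ n ∈ Finset.Icc 1 x, h n = ∑ d ∈ Finset.Icc 1 x, ((x / d : ℕ) : ℝ) * mf cc d := by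
  classical
  rw [Finset.sum_congr rfl (fun n hn => h_eq_sum_divisors
    (by rw [Finset.mem_Icc] at hn; omega))]
  rw [Finset.sum_comm' (s := Finset.Icc 1 x) (t := fun n => n.divisors)
    (t' := Finset.Icc 1 x) (s' := fun d => (Finset.Icc 1 x).filter (fun n => d ∣ n))
    (fun n d => by
      simp only [Finset.mem_Icc, Nat.mem_divisors, Finset.mem_filter]
      constructor
      · rintro ⟨⟨h1n, hnx⟩, hdn, hn0⟩
        have hd0 : d ≠ 0 := by rintro rfl; exact hn0 (Nat.eq_zero_of_zero_dvd hdn)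
        have hdx : d ≤ x := le_trans (Nat.le_of_dvd (by omega) hdn) hnx
        exact ⟨⟨⟨h1n, hnx⟩, hdn⟩, ⟨by omega, hdx⟩⟩
      · rintro ⟨⟨⟨h1n, hnx⟩, hdn⟩, _⟩
        exact ⟨⟨h1n, hnx⟩, hdn, by omega⟩)]
  apply Finset.sum_congr rfl
  intro d _
  rw [Finset.sum_const, nsmul_eq_mul]
  congr 2
  rw [show Finset.Icc 1 x = Finset.Ioc 0 x from Finset.Icc_add_one_left_eq_Ioc 0 x,
    Nat.Ioc_filter_dvd_card_eq_div]

/-- The summand functions for dominated convergence. -/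
noncomputable def F (x d : ℕ) : ℝ :=
  if d ∈ Finset.Icc 1 x then mf cc d * ((x / d : ℕ) : ℝ) / (x : ℝ) else 0

lemma avg_eq_tsum (x : ℕ) :
    (1 / (x : ℝ)) * ∑ n ∈ Finset.Icc 1 x, h n = ∑' d, F x d := by
  rw [tsum_eq_sum (s := Finset.Icc 1 x) (fun d hd => by rw [F, if_neg hd]),
    sum_h_eq, Finset.mul_sum]
  apply Finset.sum_congr rfl
  intro d hd
  rw [F, if_pos hd]
  ring

lemma F_le (x d : ℕ) : ‖F x d‖ ≤ ‖mf w1 d‖ := by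
  unfold F
  split
  · rename_i hd
    rw [Finset.mem_Icc] at hd
    have hd0 : (0:ℝ) < (d:ℝ) := by exact_mod_cast hd.1
    have hx0 : (0:ℝ) < (x:ℝ) := by
      have : 1 ≤ x := le_trans hd.1 hd.2
      exact_mod_cast this
    have hnum : (0:ℝ) ≤ mf cc d * ((x / d : ℕ) : ℝ) / (x : ℝ) := by
      apply div_nonneg _ hx0.le
      exact mul_nonneg (mf_cc_nonneg d) (Nat.cast_nonneg _)
    rw [Real.norm_eq_abs, abs_of_nonneg hnum, mf_w1_eq, Real.norm_eq_abs,
      abs_of_nonneg (div_nonneg (mf_cc_nonneg d) (Nat.cast_nonneg _))]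
    rw [div_le_div_iff₀ hx0 hd0, mul_assoc]
    apply mul_le_mul_of_nonneg_left _ (mf_cc_nonneg d)
    have : ((x / d : ℕ) : ℝ) * (d:ℝ) = ((x / d * d : ℕ) : ℝ) := by push_cast; ring
    rw [this]
    exact_mod_cast Nat.div_mul_le_self x d
  · simp

lemma F_tendsto (d : ℕ) : Tendsto (fun x => F x d) atTop (𝓝 (mf w1 d)) := by
  rcases Nat.eq_zero_or_pos d with rfl | hd
  · have : ∀ x, F x 0 = 0 := fun x => by
      rw [F, if_neg]; simp
    simp only [this, mf_zero]
    exact tendsto_const_nhds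
  · have hdr : (0:ℝ) < (d:ℝ) := by exact_mod_cast hd
    rw [mf_w1_eq]
    have hupper : ∀ x, F x d ≤ mf cc d / (d : ℝ) := fun x => by
      have := F_le x d
      rw [Real.norm_eq_abs, Real.norm_eq_abs, mf_w1_eq,
        abs_of_nonneg (div_nonneg (mf_cc_nonneg d) (Nat.cast_nonneg _))] at this
      exact le_trans (le_abs_self _) this
    have hlower : ∀ x ≥ d, mf cc d / (d:ℝ) - mf cc d / (x:ℝ) ≤ F x d := by
      intro x hx
      have hx1 : 1 ≤ x := le_trans hd hx
      have hxr : (0:ℝ) < (x:ℝ) := by exact_mod_cast hx1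
      rw [F, if_pos (Finset.mem_Icc.mpr ⟨hd, hx⟩)]
      have hfloor : (x:ℝ)/(d:ℝ) - 1 ≤ ((x / d : ℕ) : ℝ) := by
        have h1 : x < d * (x / d) + d := by
          conv_lhs => rw [← Nat.div_add_mod x d]
          have := Nat.mod_lt x hd
          omega
        have h2 : (x:ℝ) < (d:ℝ) * ((x / d : ℕ):ℝ) + (d:ℝ) := by exact_mod_cast h1
        rw [div_sub_one hdr.ne', div_le_iff₀ hdr]
        nlinarith
      have hc := mf_cc_nonneg d
      calc mf cc d / (d:ℝ) - mf cc d / (x:ℝ)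
          = mf cc d * ((x:ℝ)/(d:ℝ) - 1) / (x:ℝ) := by field_simp
        _ ≤ mf cc d * ((x / d : ℕ) : ℝ) / (x : ℝ) := by
            gcongr
    refine tendsto_of_tendsto_of_tendsto_of_le_of_le'
      (g := fun x : ℕ => mf cc d / (d:ℝ) - mf cc d / (x:ℝ))
      (h := fun _ : ℕ => mf cc d / (d:ℝ)) ?_ ?_ ?_ ?_
    · simpa using tendsto_const_nhds.sub (tendsto_const_div_atTop_nhds_zero_nat (mf cc d))
    · exact tendsto_const_nhds
    · exact Filter.eventually_atTop.mpr ⟨d, hlower⟩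
    · exact Filter.Eventually.of_forall hupper

end HMeanAux

open HMeanAux in
/-- The mean value of `h` exists and equals
`∏_{p prime, p > 2} (1 + 1/(p(p-2))) = 1/C₂`. -/
theorem h_mean_value :
    Tendsto (fun x : ℕ => (1 / (x : ℝ)) * ∑ n ∈ Finset.Icc 1 x, h n) atTop
      (𝓝 (∏' p : {p : ℕ // p.Prime ∧ 2 < p},
        (1 + 1 / (((p : ℕ) : ℝ) * (((p : ℕ) : ℝ) - 2))))) ∧
    (∏' p : {p : ℕ // p.Prime ∧ 2 < p},
        (1 + 1 / (((p : ℕ) : ℝ) * (((p : ℕ) : ℝ) - 2)))) = 1 / C2 := by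
  have hfun1 : (fun p : OP => 1 + w1 (p : ℕ))
      = fun p : OP => 1 + 1 / (((p : ℕ) : ℝ) * (((p : ℕ) : ℝ) - 2)) :=
    funext fun p => by rw [w1, if_pos p.2.2]
  have hfun2 : (fun p : OP => 1 + w2 (p : ℕ))
      = fun p : OP => 1 - 1 / (((p : ℕ) : ℝ) - 1) ^ 2 :=
    funext fun p => by rw [w2, if_pos p.2.2]; ring
  have hP : HasProd (fun p : OP => 1 + 1 / (((p : ℕ) : ℝ) * (((p : ℕ) : ℝ) - 2)))
      (∑' n, mf w1 n) := hfun1 ▸ hasProd_mf bnd_w1 w1_two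
  have hC : HasProd (fun p : OP => 1 - 1 / (((p : ℕ) : ℝ) - 1) ^ 2)
      (∑' n, mf w2 n) := hfun2 ▸ hasProd_mf bnd_w2 w2_two
  have hprod_eq : (∏' p : OP, (1 + 1 / (((p : ℕ) : ℝ) * (((p : ℕ) : ℝ) - 2))))
      = ∑' n, mf w1 n := hP.tprod_eq
  have hC2_eq : C2 = ∑' n, mf w2 n := hC.tprod_eq
  have hone : (fun p : OP => (1 + 1 / (((p : ℕ) : ℝ) * (((p : ℕ) : ℝ) - 2)))
      * (1 - 1 / (((p : ℕ) : ℝ) - 1) ^ 2)) = fun _ : OP => (1:ℝ) := by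
    funext p
    have h3 : (3:ℝ) ≤ ((p : ℕ) : ℝ) := by exact_mod_cast p.2.2
    have h0 : ((p : ℕ) : ℝ) ≠ 0 := by linarith
    have h1 : ((p : ℕ) : ℝ) - 1 ≠ 0 := by linarith
    have h2 : ((p : ℕ) : ℝ) - 2 ≠ 0 := by linarith
    field_simp
    ring
  have hmul : HasProd (fun _ : OP => (1:ℝ)) ((∑' n, mf w1 n) * (∑' n, mf w2 n)) :=
    hone ▸ hP.mul hC
  have hPC : (∑' n, mf w1 n) * (∑' n, mf w2 n) = 1 := hmul.unique hasProd_one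
  constructor
  · rw [hprod_eq]
    have htend : Tendsto (fun x : ℕ => ∑' d, F x d) atTop (𝓝 (∑' d, mf w1 d)) :=
      tendsto_tsum_of_dominated_convergence (summable_mf_norm bnd_w1) F_tendsto
        (Filter.Eventually.of_forall F_le)
    exact htend.congr (fun x => (avg_eq_tsum x).symm)
  · rw [hprod_eq, hC2_eq]
    have hS2 : (∑' n, mf w2 n) ≠ 0 := by
      intro hzero
      rw [hzero, mul_zero] at hPC
      norm_num at hPC
    rw [eq_div_iff hS2]
    exact hPC
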